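/- Mutation invariance of linear grading constraints: let B be a skew-symmetrizable I × I matrix, k ∈ I, and let (v_j)_{j ∈ I} be vectors in a rational vector space satisfying Σ_j b_{kj} v_j = 0 for the mutation index k (i.e., both exchange monomials have equal weight Σ_{b_{kj}>0} b_{kj} v_j = Σ_{b_{kj}<0} (-b_{kj}) v_j, and the new variable gets weight v'_k = -v_k + Σ_{b_{kj}>0} b_{kj} v_j, with v'_j = v_j for j ≠ k). Then for every index i, Σ_j b'_{ij} v'_j = Σ_j b_{ij} v_j, where B' is the mutation of B at k. -/

import Mathlib

open scoped BigOperators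

/-- Mutation invariance of linear grading constraints: if `B` is
skew-symmetrizable, `B' = μ_k(B)` its mutation at `k`, and the vectors `(v_j)` satisfy the
weight-homogeneity condition `∑ j, b_{kj} • v_j = 0`, then with the mutated weights
`v'_k = -v_k + ∑_{b_{kj} > 0} b_{kj} • v_j` and `v'_j = v_j` for `j ≠ k`, one has
`∑ j, b'_{ij} • v'_j = ∑ j, b_{ij} • v_j` for every index `i`. -/
theorem stmt17 {I : Type*} [Fintype I] [DecidableEq I] (B B' : I → I → ℚ) (d : I → ℤ)
    (hd : ∀ i, 0 < d i)
    (hskew : ∀ i j, B i j * (d j : ℚ) = -(B j i * (d i : ℚ)))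
    (k : I)
    (hB' : ∀ i j, B' i j =
      if i = k ∨ j = k then -B i j
      else if 0 < B i k * B k j then B i j + |B i k| * B k j
      else B i j)
    {M : Type*} [AddCommGroup M] [Module ℚ M] (v v' : I → M)
    (hv : ∑ j, B k j • v j = 0)
    (hv'k : v' k = -v k + ∑ j ∈ Finset.univ.filter (fun j => 0 < B k j), B k j • v j)
    (hv' : ∀ j, j ≠ k → v' j = v j) :
    ∀ i, ∑ j, B' i j • v' j = ∑ j, B i j • v j := by
  intro i
  have hdk : (d k : ℚ) ≠ 0 := Int.cast_ne_zero.mpr (hd k).ne'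
  have Bkk : B k k = 0 := by
    have h := hskew k k
    have h2 : B k k * (d k : ℚ) = 0 := by linarith
    rcases mul_eq_zero.mp h2 with h3 | h3
    · exact h3
    · exact absurd h3 hdk
  set Tp := ∑ j, (if 0 < B k j then B k j else 0) • v j with hTp
  set Tn := ∑ j, (if B k j < 0 then B k j else 0) • v j with hTn
  have hsum : Tp + Tn = 0 := by
    rw [hTp, hTn, ← Finset.sum_add_distrib, ← hv]
    apply Finset.sum_congr rfl
    intro j _
    rw [← add_smul]
    congr 1
    rcases lt_trichotomy (B k j) 0 with h | h | h
    · rw [if_neg (by linarith), if_pos h, zero_add]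
    · rw [if_neg (by simp [h]), if_neg (by simp [h]), h, add_zero]
    · rw [if_pos h, if_neg (by linarith), add_zero]
  have hSS : (∑ j ∈ Finset.univ.filter (fun j => 0 < B k j), B k j • v j) = Tp := by
    rw [Finset.sum_filter, hTp]
    apply Finset.sum_congr rfl
    intro j _
    by_cases h : 0 < B k j
    · rw [if_pos h, if_pos h]
    · rw [if_neg h, if_neg h, zero_smul]
  by_cases hik : i = k
  · subst hik
    have hcongr : ∀ j ∈ Finset.univ, B' i j • v' j = -(B i j • v j) := by
      intro j _
      rw [hB' i j, if_pos (Or.inl rfl)]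
      by_cases hj : j = i
      · subst hj; rw [Bkk]; simp
      · rw [hv' j hj, neg_smul]
    rw [Finset.sum_congr rfl hcongr, Finset.sum_neg_distrib, hv, neg_zero]
  · have key : ∑ j, (if 0 < B i k * B k j then |B i k| * B k j else 0) • v j
        = B i k • Tp := by
      rcases lt_trichotomy (B i k) 0 with h | h | h
      · have hpt : ∀ j, (if 0 < B i k * B k j then |B i k| * B k j else 0)
            = (-B i k) * (if B k j < 0 then B k j else 0) := by
          intro j
          by_cases hj : B k j < 0
          · rw [if_pos hj, if_pos (mul_pos_of_neg_of_neg h hj), abs_of_neg h]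
          · rw [if_neg hj, if_neg (by nlinarith [not_lt.mp hj]), mul_zero]
        simp_rw [hpt, mul_smul]
        rw [← Finset.smul_sum, ← hTn]
        have hTn' : Tn = -Tp := eq_neg_of_add_eq_zero_left (by rw [add_comm]; exact hsum)
        rw [hTn', smul_neg, neg_smul, neg_neg]
      · simp [h]
      · have hpt : ∀ j, (if 0 < B i k * B k j then |B i k| * B k j else 0)
            = B i k * (if 0 < B k j then B k j else 0) := by
          intro j
          by_cases hj : 0 < B k j
          · rw [if_pos hj, if_pos (mul_pos h hj), abs_of_pos h]
          · rw [if_neg hj, if_neg (by nlinarith [not_lt.mp hj]), mul_zero]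
        simp_rw [hpt, mul_smul]
        rw [← Finset.smul_sum, ← hTp]
    rw [← Finset.sum_erase_add Finset.univ _ (Finset.mem_univ k),
        ← Finset.sum_erase_add Finset.univ (fun j => B i j • v j) (Finset.mem_univ k)]
    have hzero : (if 0 < B i k * B k k then |B i k| * B k k else 0) • v k = 0 := by
      rw [Bkk]; simp
    have herase : ∑ j ∈ Finset.univ.erase k, B' i j • v' j
        = ∑ j ∈ Finset.univ.erase k, B i j • v j
          + ∑ j, (if 0 < B i k * B k j then |B i k| * B k j else 0) • v j := by
      have hfull : ∑ j, (if 0 < B i k * B k j then |B i k| * B k j else 0) • v j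
          = ∑ j ∈ Finset.univ.erase k,
              (if 0 < B i k * B k j then |B i k| * B k j else 0) • v j :=
        (Finset.sum_erase (Finset.univ : Finset I) hzero).symm
      rw [hfull, ← Finset.sum_add_distrib]
      apply Finset.sum_congr rfl
      intro j hj
      have hjk : j ≠ k := Finset.ne_of_mem_erase hj
      rw [hB' i j, if_neg (by tauto), hv' j hjk]
      by_cases hc : 0 < B i k * B k j
      · rw [if_pos hc, if_pos hc, add_smul]
      · rw [if_neg hc, if_neg hc, zero_smul, add_zero]
    rw [herase, key, hB' i k, if_pos (Or.inr rfl), hv'k, hSS]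
    have : (-B i k) • (-v k + Tp) = B i k • v k - B i k • Tp := by
      rw [smul_add, neg_smul, neg_smul, smul_neg, neg_neg, sub_eq_add_neg]
    rw [this]
    abel
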